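/- Let G be a connected graph and L a list-assignment such that |L(v)| ≥ deg(v) for all vertices v and |L(w)| ≥ deg(w)+1 for at least one vertex w. Then G admits a proper L-colouring. -/

import Mathlib

/-- A proper list colouring: every vertex gets a colour from its list,
adjacent vertices get different colours. -/
def properL {V : Type*} (G : SimpleGraph V) (L : V → Finset ℕ) (c : V → ℕ) : Prop :=
  (∀ v, c v ∈ L v) ∧ ∀ ⦃u w⦄, G.Adj u w → c u ≠ c w

private lemma walk_avoid {V : Type*} {G : SimpleGraph V} {u : V} :
    ∀ {x y : V} (p : G.Walk x y) (_ : ∀ z ∈ p.support, z ≠ u)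
      (hx : x ≠ u) (hy : y ≠ u),
      (G.comap (Subtype.val : {v : V // v ≠ u} → V)).Reachable ⟨x, hx⟩ ⟨y, hy⟩ := by
  intro x y p
  induction p with
  | nil => intro _ _ _; rfl
  | cons h q ih =>
      intro hs hx hy
      have hb := hs _ (by exact List.mem_cons_of_mem _ q.start_mem_support)
      exact (SimpleGraph.Adj.reachable (by exact h)).trans
        (ih (fun z hz => hs z (by simp [SimpleGraph.Walk.support_cons, hz])) hb hy)

private lemma image_nbhd {V : Type*} (G : SimpleGraph V) (u : V) (y : {v : V // v ≠ u}) :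
    (Subtype.val : {v : V // v ≠ u} → V) ''
      ((G.comap (Subtype.val : {v : V // v ≠ u} → V)).neighborSet y)
      = G.neighborSet y.val \ {u} := by
  ext z
  simp only [Set.mem_image, SimpleGraph.mem_neighborSet, SimpleGraph.comap_adj,
    Set.mem_diff, Set.mem_singleton_iff]
  constructor
  · rintro ⟨⟨z', hz'⟩, hadj, rfl⟩; exact ⟨hadj, hz'⟩
  · rintro ⟨hadj, hz⟩; exact ⟨⟨z, hz⟩, hadj, rfl⟩

private lemma aux (n : ℕ) : ∀ (V : Type*) [Fintype V] (G : SimpleGraph V),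
    G.Connected → Fintype.card V ≤ n →
    ∀ (L : V → Finset ℕ) (w : V),
      (∀ v, (G.neighborSet v).ncard ≤ (L v).card) →
      (G.neighborSet w).ncard + 1 ≤ (L w).card →
      ∃ c : V → ℕ, properL G L c := by
  induction n with
  | zero =>
      intro V _ G hG hcard L w h1 h2
      exact absurd (Fintype.card_pos_iff.mpr hG.nonempty) (by omega)
  | succ n ih =>
      intro V _ G hG hcard L w h1 h2
      classical
      by_cases hall : ∀ x : V, x = w
      · -- single vertex
        have hLw : (L w).Nonempty := Finset.card_pos.mp (by omega)
        obtain ⟨a, ha⟩ := hLw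
        refine ⟨fun _ => a, fun v => (hall v) ▸ ha, ?_⟩
        intro x y hxy
        exact absurd hxy (by rw [hall x, hall y]; exact G.irrefl)
      · push_neg at hall
        obtain ⟨x₀, hx₀⟩ := hall
        have : Nonempty V := hG.nonempty
        -- pick u at maximal distance from w
        obtain ⟨u, hu⟩ := Finite.exists_max (fun v : V => G.dist w v)
        have hxpos : 0 < G.dist w x₀ :=
          hG.pos_dist_of_ne (fun h => hx₀ h.symm)
        have huw : u ≠ w := by
          intro h
          have := hu x₀
          rw [h, SimpleGraph.dist_self] at this
          omega
        -- the graph with u removed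
        set V' := {v : V // v ≠ u} with hV'
        set G' : SimpleGraph V' := G.comap Subtype.val with hG'
        -- shortest-walk-avoids-u argument
        have havoid : ∀ (x : V) (hx : x ≠ u), G'.Reachable ⟨x, hx⟩ ⟨w, Ne.symm huw⟩ := by
          intro x hx
          obtain ⟨p, hp⟩ := (hG x w).exists_walk_length_eq_dist
          refine walk_avoid p ?_ hx (Ne.symm huw)
          intro z hz hzu
          by_cases hzx : z = x
          · exact hx (hzx ▸ hzu)
          · have hspec := p.take_spec hz
            have hlen : (p.takeUntil z hz).length + (p.dropUntil z hz).length = p.length := by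
              rw [← SimpleGraph.Walk.length_append, hspec]
            have ht1 : 1 ≤ (p.takeUntil z hz).length := by
              rcases Nat.eq_zero_or_pos (p.takeUntil z hz).length with h0 | h0
              · exact absurd (SimpleGraph.Walk.eq_of_length_eq_zero h0).symm hzx
              · omega
            have hd : G.dist z w ≤ (p.dropUntil z hz).length :=
              SimpleGraph.dist_le _
            have h3 : G.dist w x ≤ G.dist w u := hu x
            have h4 : G.dist w z = G.dist z w := SimpleGraph.dist_comm ..
            have h5 : G.dist w x = G.dist x w := SimpleGraph.dist_comm ..
            have h6 : G.dist w z = G.dist w u := by rw [hzu]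
            omega
        have hG'conn : G'.Connected := by
          have : Nonempty V' := ⟨⟨w, Ne.symm huw⟩⟩
          exact ⟨fun a b => (havoid a.1 a.2).trans (havoid b.1 b.2).symm⟩
        -- u has a neighbour, so L u is nonempty
        have hadj_u : ∃ z, G.Adj u z := by
          obtain ⟨p⟩ := hG u w
          cases p with
          | nil => exact absurd rfl huw
          | cons h q => exact ⟨_, h⟩
        obtain ⟨z₀, hz₀⟩ := hadj_u
        have hnbru : 0 < (G.neighborSet u).ncard :=
          (Set.ncard_pos (Set.toFinite _)).mpr ⟨z₀, hz₀⟩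
        have hLu : (L u).Nonempty := Finset.card_pos.mp (lt_of_lt_of_le hnbru (h1 u))
        obtain ⟨cu, hcu⟩ := hLu
        -- new lists
        set L' : V' → Finset ℕ := fun y => if G.Adj u y.1 then (L y.1).erase cu else L y.1
          with hL'
        -- ncard of neighbourhoods in G'
        have hnb : ∀ y : V', (G'.neighborSet y).ncard = (G.neighborSet y.1 \ {u}).ncard := by
          intro y
          rw [← image_nbhd G u y, Set.ncard_image_of_injective _ Subtype.val_injective]
        have hcard' : Fintype.card V' ≤ n := by
          have : Fintype.card V' < Fintype.card V := by
            apply Fintype.card_lt_of_injective_of_notMem Subtype.val Subtype.val_injective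
              (b := u)
            rintro ⟨⟨y, hy⟩, h⟩; exact hy h
          omega
        have key1 : ∀ y : V', (G'.neighborSet y).ncard ≤ (L' y).card := by
          intro y
          rw [hnb y]
          by_cases hadj : G.Adj u y.1
          · have hmem : u ∈ G.neighborSet y.1 := hadj.symm
            rw [Set.ncard_diff_singleton_of_mem hmem]
            simp only [hL', if_pos hadj]
            have := Finset.pred_card_le_card_erase (s := L y.1) (a := cu)
            have := h1 y.1
            omega
          · have hnm : u ∉ G.neighborSet y.1 := fun hm => hadj hm.symm
            rw [Set.diff_singleton_eq_self hnm]
            simp only [hL', if_neg hadj]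
            exact h1 y.1
        have key2 : (G'.neighborSet ⟨w, Ne.symm huw⟩).ncard + 1
            ≤ (L' ⟨w, Ne.symm huw⟩).card := by
          rw [hnb]
          by_cases hadj : G.Adj u w
          · have hmem : u ∈ G.neighborSet w := hadj.symm
            rw [Set.ncard_diff_singleton_of_mem hmem]
            simp only [hL', if_pos hadj]
            have := Finset.pred_card_le_card_erase (s := L w) (a := cu)
            have h0 : 0 < (G.neighborSet w).ncard :=
              (Set.ncard_pos (Set.toFinite _)).mpr ⟨u, hmem⟩
            omega
          · have hnm : u ∉ G.neighborSet w := fun hm => hadj hm.symm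
            rw [Set.diff_singleton_eq_self hnm]
            simp only [hL', if_neg hadj]
            exact h2
        obtain ⟨c', hc'1, hc'2⟩ := ih V' G' hG'conn hcard' L' ⟨w, Ne.symm huw⟩ key1 key2
        -- combine
        refine ⟨fun v => if h : v = u then cu else c' ⟨v, h⟩, ?_, ?_⟩
        · intro v
          by_cases h : v = u
          · subst h; simpa using hcu
          · simp only [dif_neg h]
            have := hc'1 ⟨v, h⟩
            simp only [hL'] at this
            split_ifs at this with hadj
            · exact Finset.mem_of_mem_erase this
            · exact this
        · intro a b hab
          by_cases ha : a = u <;> by_cases hb : b = u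
          · subst ha; subst hb; exact absurd hab (G.irrefl)
          · subst ha
            simp only [dif_pos, dif_neg hb]
            have := hc'1 ⟨b, hb⟩
            simp only [hL', if_pos hab] at this
            exact fun h => (Finset.ne_of_mem_erase this) h.symm
          · subst hb
            simp only [dif_pos, dif_neg ha]
            have := hc'1 ⟨a, ha⟩
            simp only [hL', if_pos hab.symm] at this
            exact Finset.ne_of_mem_erase this
          · simp only [dif_neg ha, dif_neg hb]
            exact hc'2 (u := ⟨a, ha⟩) (w := ⟨b, hb⟩) hab

theorem stmt0 {V : Type*} [Fintype V] (G : SimpleGraph V) (hG : G.Connected)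
    (L : V → Finset ℕ)
    (h1 : ∀ v, (G.neighborSet v).ncard ≤ (L v).card)
    (h2 : ∃ w, (G.neighborSet w).ncard + 1 ≤ (L w).card) :
    ∃ c : V → ℕ, properL G L c := by
  obtain ⟨w, hw⟩ := h2
  exact aux (Fintype.card V) V G hG le_rfl L w h1 hw
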